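/- With the construction ∂(T⊗a) = Σ_{i,j}((T⊗I_p)Δ_{ij})⊗∂_{ij}a on Ã = M_p⊗A from a multivariable GDQ ring (A, μ, (∂_{ij})), ∂ is coassociative: (∂⊗id_Ã)∘∂ = (id_Ã⊗∂)∘∂. -/

import Mathlib

/- STATEMENT 7: (4.2) The comultiplication ∂(T⊗a) = Σ_{i,j}((T⊗I_p)Δ_{ij})⊗∂_{ij}a
on Ã = M_p ⊗ A constructed from a multivariable GDQ ring is coassociative:
(∂ ⊗ id_Ã) ∘ ∂ = (id_Ã ⊗ ∂) ∘ ∂. -/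

open TensorProduct

set_option maxHeartbeats 1000000
set_option synthInstance.maxHeartbeats 400000

noncomputable section

variable {p : ℕ} {A : Type*} [Ring A] [Algebra ℂ A]

/-- Matrix unit `e_{ij}` in `M_p(ℂ)`. -/
def matUnit (i j : Fin p) : Matrix (Fin p) (Fin p) ℂ := Matrix.single i j 1

/-- The map `T ⊗ (x ⊗ y) ↦ (T e_{ki} ⊗ x) ⊗ (e_{jk} ⊗ y)`. -/
def Lmap (i j k : Fin p) :
    (Matrix (Fin p) (Fin p) ℂ ⊗[ℂ] (A ⊗[ℂ] A)) →ₗ[ℂ]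
      (Matrix (Fin p) (Fin p) ℂ ⊗[ℂ] A) ⊗[ℂ] (Matrix (Fin p) (Fin p) ℂ ⊗[ℂ] A) :=
  (TensorProduct.map
      (TensorProduct.map (LinearMap.mulRight ℂ (matUnit k i)) LinearMap.id)
      (TensorProduct.mk ℂ (Matrix (Fin p) (Fin p) ℂ) A (matUnit j k))).comp
    (TensorProduct.assoc ℂ (Matrix (Fin p) (Fin p) ℂ) A A).symm.toLinearMap

/-- The comultiplication `∂` on `Ã = M_p ⊗ A`. -/
def Dbig (D : Fin p → Fin p → (A →ₗ[ℂ] A ⊗[ℂ] A)) :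
    (Matrix (Fin p) (Fin p) ℂ ⊗[ℂ] A) →ₗ[ℂ]
      (Matrix (Fin p) (Fin p) ℂ ⊗[ℂ] A) ⊗[ℂ] (Matrix (Fin p) (Fin p) ℂ ⊗[ℂ] A) :=
  ∑ i : Fin p, ∑ j : Fin p, ∑ k : Fin p,
    (Lmap i j k).comp (LinearMap.lTensor (Matrix (Fin p) (Fin p) ℂ) (D i j))

/-! ### Auxiliary lemmas -/

lemma matUnit_mul (i j k l : Fin p) :
    matUnit i j * matUnit k l = if j = k then matUnit (p := p) i l else 0 := by
  unfold matUnit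
  split
  · next h =>
      subst h
      rw [Matrix.single_mul_single_same (c := (1:ℂ)) i j l (1:ℂ), one_mul]
  · next h => exact Matrix.single_mul_single_of_ne (c := (1:ℂ)) i j _ h (1:ℂ)

/-- `a ↦ M ⊗ₜ a`. -/
def mk' (M : Matrix (Fin p) (Fin p) ℂ) : A →ₗ[ℂ] Matrix (Fin p) (Fin p) ℂ ⊗[ℂ] A :=
  TensorProduct.mk ℂ _ A M

lemma mk'_zero : (mk' (A := A) (0 : Matrix (Fin p) (Fin p) ℂ)) = 0 := by
  ext a; simp [mk']

lemma map_sum_left {R M N P Q : Type*} [CommSemiring R] [AddCommMonoid M] [AddCommMonoid N]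
    [AddCommMonoid P] [AddCommMonoid Q] [Module R M] [Module R N] [Module R P] [Module R Q]
    {ι : Type*} (s : Finset ι) (f : ι → (M →ₗ[R] P)) (g : N →ₗ[R] Q) :
    TensorProduct.map (∑ i ∈ s, f i) g = ∑ i ∈ s, TensorProduct.map (f i) g := by
  classical
  induction s using Finset.induction_on with
  | empty => apply TensorProduct.ext'; intro x y; simp
  | insert _ _ h ih => simp [Finset.sum_insert h, TensorProduct.map_add_left, ih]

lemma map_sum_right {R M N P Q : Type*} [CommSemiring R] [AddCommMonoid M] [AddCommMonoid N]
    [AddCommMonoid P] [AddCommMonoid Q] [Module R M] [Module R N] [Module R P] [Module R Q]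
    {ι : Type*} (s : Finset ι) (f : M →ₗ[R] P) (g : ι → (N →ₗ[R] Q)) :
    TensorProduct.map f (∑ i ∈ s, g i) = ∑ i ∈ s, TensorProduct.map f (g i) := by
  classical
  induction s using Finset.induction_on with
  | empty => apply TensorProduct.ext'; intro x y; simp
  | insert _ _ h ih => simp [Finset.sum_insert h, TensorProduct.map_add_right, ih]

lemma map_comp_rTensor' {R M N M' P Q : Type*} [CommSemiring R] [AddCommMonoid M]
    [AddCommMonoid N] [AddCommMonoid M'] [AddCommMonoid P] [AddCommMonoid Q]
    [Module R M] [Module R N] [Module R M'] [Module R P] [Module R Q]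
    (G : M' →ₗ[R] P) (h : M →ₗ[R] M') (g : N →ₗ[R] Q) :
    TensorProduct.map (G ∘ₗ h) g = (TensorProduct.map G g) ∘ₗ LinearMap.rTensor N h := by
  apply TensorProduct.ext'; intro x y; simp

lemma map_comp_lTensor' {R M N N' P Q : Type*} [CommSemiring R] [AddCommMonoid M]
    [AddCommMonoid N] [AddCommMonoid N'] [AddCommMonoid P] [AddCommMonoid Q]
    [Module R M] [Module R N] [Module R N'] [Module R P] [Module R Q]
    (f : M →ₗ[R] P) (G : N' →ₗ[R] Q) (h : N →ₗ[R] N') :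
    TensorProduct.map f (G ∘ₗ h) = (TensorProduct.map f G) ∘ₗ LinearMap.lTensor M h := by
  apply TensorProduct.ext'; intro x y; simp

lemma Lmap_tmul (i j k : Fin p) (M : Matrix (Fin p) (Fin p) ℂ) (z : A ⊗[ℂ] A) :
    Lmap i j k (M ⊗ₜ z) =
      TensorProduct.map (mk' (M * matUnit k i)) (mk' (matUnit j k)) z := by
  induction z using TensorProduct.induction_on with
  | zero => simp only [tmul_zero, LinearMap.map_zero]
  | tmul x y => simp [Lmap, mk']
  | add u v hu hv => simp only [tmul_add, map_add, hu, hv]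

lemma Dbig_comp_mk (D : Fin p → Fin p → (A →ₗ[ℂ] A ⊗[ℂ] A)) (M : Matrix (Fin p) (Fin p) ℂ) :
    (Dbig D) ∘ₗ mk' M =
      ∑ i : Fin p, ∑ j : Fin p, ∑ k : Fin p,
        (TensorProduct.map (mk' (M * matUnit k i)) (mk' (matUnit j k))) ∘ₗ D i j := by
  apply LinearMap.ext; intro a
  simp only [Dbig, LinearMap.sum_apply, LinearMap.comp_apply, mk', mk_apply,
    LinearMap.lTensor_tmul]
  simp [Lmap_tmul, mk']

/-- The map `u ⊗ (v ⊗ w) ↦ (M₁ ⊗ u) ⊗ ((M₂ ⊗ v) ⊗ (M₃ ⊗ w))`. -/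
def Phi (M₁ M₂ M₃ : Matrix (Fin p) (Fin p) ℂ) :
    A ⊗[ℂ] (A ⊗[ℂ] A) →ₗ[ℂ]
      (Matrix (Fin p) (Fin p) ℂ ⊗[ℂ] A) ⊗[ℂ]
        ((Matrix (Fin p) (Fin p) ℂ ⊗[ℂ] A) ⊗[ℂ] (Matrix (Fin p) (Fin p) ℂ ⊗[ℂ] A)) :=
  TensorProduct.map (mk' M₁) (TensorProduct.map (mk' M₂) (mk' M₃))

lemma Phi_zero₁ (M₂ M₃ : Matrix (Fin p) (Fin p) ℂ) :
    Phi (A := A) 0 M₂ M₃ = 0 := by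
  rw [Phi, mk'_zero, TensorProduct.map_zero_left]

lemma Phi_zero₂ (M₁ M₃ : Matrix (Fin p) (Fin p) ℂ) :
    Phi (A := A) M₁ 0 M₃ = 0 := by
  rw [Phi, mk'_zero, TensorProduct.map_zero_left, TensorProduct.map_zero_right]

lemma collapse_left (T M₃ : Matrix (Fin p) (Fin p) ℂ) (i k i' j' : Fin p)
    (w : A ⊗[ℂ] (A ⊗[ℂ] A)) :
    (∑ k' : Fin p, Phi (T * matUnit k i * matUnit k' i') (matUnit j' k') M₃ w)
      = Phi (T * matUnit k i') (matUnit j' i) M₃ w := by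
  rw [Finset.sum_eq_single i]
  · rw [mul_assoc, matUnit_mul, if_pos rfl]
  · intro b _ hb
    rw [mul_assoc, matUnit_mul, if_neg (Ne.symm hb), mul_zero, Phi_zero₁,
      LinearMap.zero_apply]
  · intro h; exact absurd (Finset.mem_univ i) h

lemma collapse_right (T : Matrix (Fin p) (Fin p) ℂ) (i j k i' j' : Fin p)
    (w : A ⊗[ℂ] (A ⊗[ℂ] A)) :
    (∑ k' : Fin p, Phi (T * matUnit k i) (matUnit j k * matUnit k' i') (matUnit j' k') w)
      = Phi (T * matUnit k i) (matUnit j i') (matUnit j' k) w := by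
  rw [Finset.sum_eq_single k]
  · rw [matUnit_mul, if_pos rfl]
  · intro b _ hb
    rw [matUnit_mul, if_neg (Ne.symm hb), Phi_zero₂, LinearMap.zero_apply]
  · intro h; exact absurd (Finset.mem_univ k) h

/-- The permutation `(i,j,k,i',j') ↦ (i',j',k,i,j)` of index 5-tuples. -/
def e5 : (Fin p × Fin p × Fin p × Fin p × Fin p) ≃ (Fin p × Fin p × Fin p × Fin p × Fin p) :=
  ⟨fun x => (x.2.2.2.1, x.2.2.2.2, x.2.2.1, x.1, x.2.1),
   fun x => (x.2.2.2.1, x.2.2.2.2, x.2.2.1, x.1, x.2.1),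
   fun _ => rfl, fun _ => rfl⟩

lemma swap5 {M : Type*} [AddCommMonoid M]
    (f : Fin p → Fin p → Fin p → Fin p → Fin p → M) :
    (∑ i : Fin p, ∑ j : Fin p, ∑ k : Fin p, ∑ i' : Fin p, ∑ j' : Fin p, f i j k i' j')
      = ∑ i : Fin p, ∑ j : Fin p, ∑ k : Fin p, ∑ i' : Fin p, ∑ j' : Fin p, f i' j' k i j := by
  have h1 : ∀ (g : Fin p → Fin p → Fin p → Fin p → Fin p → M),
      (∑ x : Fin p × Fin p × Fin p × Fin p × Fin p,
          g x.1 x.2.1 x.2.2.1 x.2.2.2.1 x.2.2.2.2)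
        = ∑ i : Fin p, ∑ j : Fin p, ∑ k : Fin p, ∑ i' : Fin p, ∑ j' : Fin p, g i j k i' j' := by
    intro g
    simp only [Fintype.sum_prod_type]
  rw [← h1, ← h1]
  exact Fintype.sum_equiv e5
    (fun x => f x.1 x.2.1 x.2.2.1 x.2.2.2.1 x.2.2.2.2)
    (fun x => f x.2.2.2.1 x.2.2.2.2 x.2.2.1 x.1 x.2.1)
    (fun x => rfl)

lemma term_left (D : Fin p → Fin p → (A →ₗ[ℂ] A ⊗[ℂ] A))
    (hcompat : ∀ (i j k l : Fin p) (a : A),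
      TensorProduct.assoc ℂ A A A (LinearMap.rTensor A (D i j) (D k l a)) =
        LinearMap.lTensor A (D k l) (D i j a))
    (T : Matrix (Fin p) (Fin p) ℂ) (a : A) (i j k : Fin p) :
    (TensorProduct.assoc ℂ _ _ _)
        (LinearMap.rTensor (Matrix (Fin p) (Fin p) ℂ ⊗[ℂ] A) (Dbig D)
          (TensorProduct.map (mk' (T * matUnit k i)) (mk' (matUnit j k)) (D i j a)))
      = ∑ i' : Fin p, ∑ j' : Fin p, ∑ k' : Fin p,
          Phi (T * matUnit k i * matUnit k' i') (matUnit j' k') (matUnit j k)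
            (LinearMap.lTensor A (D i j) (D i' j' a)) := by
  have e1 : (LinearMap.rTensor (Matrix (Fin p) (Fin p) ℂ ⊗[ℂ] A) (Dbig D)) ∘ₗ
      TensorProduct.map (mk' (T * matUnit k i)) (mk' (matUnit j k))
        = TensorProduct.map ((Dbig D) ∘ₗ mk' (T * matUnit k i)) (mk' (matUnit j k)) := by
    apply TensorProduct.ext'; intro x y; simp
  rw [← LinearMap.comp_apply, e1, Dbig_comp_mk]
  simp only [map_sum_left, LinearMap.sum_apply, map_comp_rTensor', LinearMap.comp_apply,
    map_sum]
  simp only [← TensorProduct.map_map_assoc, hcompat, Phi]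

lemma term_right (D : Fin p → Fin p → (A →ₗ[ℂ] A ⊗[ℂ] A))
    (T : Matrix (Fin p) (Fin p) ℂ) (a : A) (i j k : Fin p) :
    LinearMap.lTensor (Matrix (Fin p) (Fin p) ℂ ⊗[ℂ] A) (Dbig D)
        (TensorProduct.map (mk' (T * matUnit k i)) (mk' (matUnit j k)) (D i j a))
      = ∑ i' : Fin p, ∑ j' : Fin p, ∑ k' : Fin p,
          Phi (T * matUnit k i) (matUnit j k * matUnit k' i') (matUnit j' k')
            (LinearMap.lTensor A (D i' j') (D i j a)) := by
  have e1 : (LinearMap.lTensor (Matrix (Fin p) (Fin p) ℂ ⊗[ℂ] A) (Dbig D)) ∘ₗ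
      TensorProduct.map (mk' (T * matUnit k i)) (mk' (matUnit j k))
        = TensorProduct.map (mk' (T * matUnit k i)) ((Dbig D) ∘ₗ mk' (matUnit j k)) := by
    apply TensorProduct.ext'; intro x y; simp
  rw [← LinearMap.comp_apply, e1, Dbig_comp_mk]
  simp only [map_sum_right, LinearMap.sum_apply, map_comp_lTensor', LinearMap.comp_apply,
    Phi]

theorem stmt7 (D : Fin p → Fin p → (A →ₗ[ℂ] A ⊗[ℂ] A))
    -- each ∂_{ij} is coassociative and the family is compatible:
    -- (∂_{kl} ⊗ id) ∘ ∂_{ij} = (id ⊗ ∂_{ij}) ∘ ∂_{kl} for all indices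
    (hcompat : ∀ (i j k l : Fin p) (a : A),
      TensorProduct.assoc ℂ A A A (LinearMap.rTensor A (D i j) (D k l a)) =
        LinearMap.lTensor A (D k l) (D i j a)) :
    ∀ x : Matrix (Fin p) (Fin p) ℂ ⊗[ℂ] A,
      TensorProduct.assoc ℂ
          (Matrix (Fin p) (Fin p) ℂ ⊗[ℂ] A)
          (Matrix (Fin p) (Fin p) ℂ ⊗[ℂ] A)
          (Matrix (Fin p) (Fin p) ℂ ⊗[ℂ] A)
          (LinearMap.rTensor (Matrix (Fin p) (Fin p) ℂ ⊗[ℂ] A) (Dbig D) (Dbig D x)) =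
        LinearMap.lTensor (Matrix (Fin p) (Fin p) ℂ ⊗[ℂ] A) (Dbig D) (Dbig D x) := by
  intro x
  induction x using TensorProduct.induction_on with
  | zero => simp only [LinearMap.map_zero, LinearEquiv.map_zero]
  | add u v hu hv => simp only [map_add, hu, hv]
  | tmul T a =>
    have hD : Dbig D (T ⊗ₜ[ℂ] a) =
        ∑ i : Fin p, ∑ j : Fin p, ∑ k : Fin p,
          TensorProduct.map (mk' (T * matUnit k i)) (mk' (matUnit j k)) (D i j a) := by
      have h := LinearMap.congr_fun (Dbig_comp_mk D T) a
      simpa [mk', LinearMap.sum_apply] using h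
    rw [hD]
    simp only [map_sum]
    simp only [term_left D hcompat T a, term_right D T a]
    simp only [collapse_left, collapse_right]
    exact swap5 (fun i j k i' j' =>
      Phi (T * matUnit k i') (matUnit j' i) (matUnit j k)
        (LinearMap.lTensor A (D i j) (D i' j' a)))
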